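/- Let Γ be a group, σ : Γ × Γ → U(1) a multiplier, and T^L_γ the associated left magnetic translations on ℓ²(Γ). Let A^L(Γ,σ̄) be the double commutant (bicommutant) of the set {T^L_γ : γ ∈ Γ} inside the algebra of bounded operators on ℓ²(Γ). For a bounded operator A on ℓ²(Γ), write A_{x,y} = ⟨A δ_y, δ_x⟩ for x,y ∈ Γ. Then A ∈ A^L(Γ,σ̄) if and only if A_{xγ, yγ} = conj(σ(x,γ))·σ(y,γ)·A_{x,y} for all x, y, γ ∈ Γ. -/

import Mathlib

open Complex
open scoped ENNReal

namespace TwistedVNAux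

variable {Γ : Type*} [Group Γ] [DecidableEq Γ]

private lemma unit_conj_mul {z : ℂ} (hz : ‖z‖ = 1) : (starRingEnd ℂ) z * z = 1 := by
  rw [mul_comm, Complex.mul_conj]
  norm_cast
  rw [Complex.normSq_eq_norm_sq, hz, one_pow]

/-- evaluation at a coordinate as a continuous linear map -/
noncomputable def evalCLM (x : Γ) : (lp (fun _ : Γ => ℂ) 2) →L[ℂ] ℂ :=
  LinearMap.mkContinuous
    { toFun := fun f => f x
      map_add' := fun f g => by simp [lp.coeFn_add]
      map_smul' := fun c f => by simp [lp.coeFn_smul] }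
    1 fun f => by
      show ‖f x‖ ≤ 1 * ‖f‖
      simpa using lp.norm_apply_le_norm (by norm_num : (2 : ℝ≥0∞) ≠ 0) f x

@[simp] lemma evalCLM_apply (x : Γ) (f : lp (fun _ : Γ => ℂ) 2) : evalCLM x f = f x := rfl

lemma single_eq_smul (z : Γ) (c : ℂ) :
    (lp.single 2 z c : lp (fun _ : Γ => ℂ) 2) = c • lp.single 2 z (1 : ℂ) := by
  rw [← lp.single_smul, smul_eq_mul, mul_one]

lemma hasSum_matrix (A : (lp (fun _ : Γ => ℂ) 2) →L[ℂ] lp (fun _ : Γ => ℂ) 2)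
    (f : lp (fun _ : Γ => ℂ) 2) (x : Γ) :
    HasSum (fun z : Γ => f z * (A (lp.single 2 z 1)) x) ((A f) x) := by
  have h1 : HasSum (fun z : Γ => lp.single 2 z (f z)) f :=
    lp.hasSum_single (by norm_num : (2 : ℝ≥0∞) ≠ ⊤) f
  have h2 := ((evalCLM x).comp A).hasSum h1
  have heq : (fun z : Γ => f z * (A (lp.single 2 z 1)) x)
      = fun z : Γ => ((evalCLM x).comp A) (lp.single 2 z (f z)) := by
    funext z
    have hs : (lp.single 2 z (f z) : lp (fun _ : Γ => ℂ) 2)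
        = f z • lp.single 2 z (1 : ℂ) := single_eq_smul z (f z)
    rw [ContinuousLinearMap.comp_apply, hs, map_smul, map_smul]
    simp [smul_eq_mul]
  rw [heq]
  exact h2

lemma clm_ext_singles {A B : (lp (fun _ : Γ => ℂ) 2) →L[ℂ] lp (fun _ : Γ => ℂ) 2}
    (h : ∀ y, A (lp.single 2 y 1) = B (lp.single 2 y 1)) : A = B := by
  refine ContinuousLinearMap.ext fun f => lp.ext (funext fun x => ?_)
  have hA := hasSum_matrix A f x
  have hB := hasSum_matrix B f x
  have : (fun z : Γ => f z * (A (lp.single 2 z 1)) x)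
      = fun z : Γ => f z * (B (lp.single 2 z 1)) x := by
    funext z; rw [h]
  rw [this] at hA
  exact hA.unique hB


section R

variable (σ : Γ → Γ → ℂ)

/-- underlying function of the right magnetic translation -/
def Rfun (γ : Γ) (f : Γ → ℂ) : Γ → ℂ :=
  fun x => (starRingEnd ℂ) (σ (x * γ⁻¹) γ) * f (x * γ⁻¹)

lemma norm_Rfun (hσ_unit : ∀ a b, ‖σ a b‖ = 1) (γ : Γ) (f : Γ → ℂ) (x : Γ) :
    ‖Rfun σ γ f x‖ = ‖f (x * γ⁻¹)‖ := by
  unfold Rfun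
  rw [norm_mul, starRingEnd_apply, norm_star, hσ_unit, one_mul]

lemma memℓp_Rfun (hσ_unit : ∀ a b, ‖σ a b‖ = 1) (γ : Γ) (f : lp (fun _ : Γ => ℂ) 2) :
    Memℓp (Rfun σ γ ⇑f) 2 := by
  have hf : Summable fun x : Γ => ‖f x‖ ^ (2 : ℝ≥0∞).toReal :=
    (memℓp_gen_iff (by norm_num)).1 (lp.memℓp f)
  apply memℓp_gen
  have heq : (fun x : Γ => ‖Rfun σ γ (⇑f) x‖ ^ (2 : ℝ≥0∞).toReal)
      = (fun x : Γ => ‖f x‖ ^ (2 : ℝ≥0∞).toReal) ∘ (Equiv.mulRight γ⁻¹) := by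
    funext x
    simp [Function.comp, norm_Rfun σ hσ_unit]
  rw [heq]
  exact ((Equiv.mulRight γ⁻¹).summable_iff).2 hf

/-- the right magnetic translation as a continuous linear map -/
noncomputable def R (hσ_unit : ∀ a b, ‖σ a b‖ = 1) (γ : Γ) :
    (lp (fun _ : Γ => ℂ) 2) →L[ℂ] lp (fun _ : Γ => ℂ) 2 :=
  LinearMap.mkContinuous
    { toFun := fun f => ⟨Rfun σ γ ⇑f, memℓp_Rfun σ hσ_unit γ f⟩
      map_add' := fun f g => lp.ext (funext fun x => by
        simp [Rfun, lp.coeFn_add, Pi.add_apply]; erw [Pi.add_apply]; simp only [Rfun]; ring)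
      map_smul' := fun c f => lp.ext (funext fun x => by
        simp [Rfun, lp.coeFn_smul, Pi.smul_apply, smul_eq_mul]; ring) }
    1 fun f => by
      rw [one_mul]
      have hp : 0 < (2 : ℝ≥0∞).toReal := by norm_num
      rw [lp.norm_eq_tsum_rpow hp, lp.norm_eq_tsum_rpow hp]
      apply le_of_eq
      congr 1
      calc (∑' x : Γ, ‖(⟨Rfun σ γ ⇑f, memℓp_Rfun σ hσ_unit γ f⟩ :
              lp (fun _ : Γ => ℂ) 2) x‖ ^ (2 : ℝ≥0∞).toReal)
          = ∑' x : Γ, (fun t : Γ => ‖f t‖ ^ (2 : ℝ≥0∞).toReal) ((Equiv.mulRight γ⁻¹) x) := by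
            refine tsum_congr fun x => ?_
            have : ‖(⟨Rfun σ γ ⇑f, memℓp_Rfun σ hσ_unit γ f⟩ :
                lp (fun _ : Γ => ℂ) 2) x‖ = ‖Rfun σ γ (⇑f) x‖ := rfl
            rw [this, norm_Rfun σ hσ_unit]
            simp
        _ = ∑' x : Γ, ‖f x‖ ^ (2 : ℝ≥0∞).toReal := by
            simpa using (Equiv.mulRight γ⁻¹).tsum_eq
              (fun t : Γ => ‖f t‖ ^ (2 : ℝ≥0∞).toReal)

@[simp] lemma R_apply (hσ_unit : ∀ a b, ‖σ a b‖ = 1) (γ : Γ)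
    (f : lp (fun _ : Γ => ℂ) 2) (x : Γ) :
    (R σ hσ_unit γ f) x = (starRingEnd ℂ) (σ (x * γ⁻¹) γ) * f (x * γ⁻¹) := rfl

lemma R_single (hσ_unit : ∀ a b, ‖σ a b‖ = 1) (γ y : Γ) :
    R σ hσ_unit γ (lp.single 2 y 1)
      = (starRingEnd ℂ) (σ y γ) • lp.single 2 (y * γ) (1 : ℂ) := by
  refine lp.ext (funext fun x => ?_)
  rw [R_apply, lp.coeFn_smul, Pi.smul_apply, smul_eq_mul]
  by_cases hx : x = y * γ
  · subst hx
    rw [mul_inv_cancel_right, lp.single_apply_self, lp.single_apply_self, mul_one]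
  · have h1 : x * γ⁻¹ ≠ y := fun h => hx (by rw [← h]; group)
    rw [lp.single_apply_ne 2 y _ h1, lp.single_apply_ne 2 (y * γ) _ hx, mul_zero, mul_zero]

lemma T_single {T : Γ → (lp (fun _ : Γ => ℂ) 2 →L[ℂ] lp (fun _ : Γ => ℂ) 2)}
    (hT : ∀ γ f γ', (T γ f) γ' = f (γ⁻¹ * γ') * (starRingEnd ℂ) (σ γ (γ⁻¹ * γ')))
    (g y : Γ) :
    T g (lp.single 2 y 1)
      = (starRingEnd ℂ) (σ g y) • lp.single 2 (g * y) (1 : ℂ) := by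
  refine lp.ext (funext fun x => ?_)
  rw [hT, lp.coeFn_smul, Pi.smul_apply, smul_eq_mul]
  by_cases hx : x = g * y
  · subst hx
    rw [inv_mul_cancel_left, lp.single_apply_self, lp.single_apply_self, one_mul, mul_one]
  · have h1 : g⁻¹ * x ≠ y := fun h => hx (by rw [← h]; group)
    rw [lp.single_apply_ne 2 y _ h1, lp.single_apply_ne 2 (g * y) _ hx, zero_mul, mul_zero]

lemma R_mem_centralizer (hσ_unit : ∀ a b, ‖σ a b‖ = 1)
    (hσ_cocycle : ∀ γ₁ γ₂ γ₃, σ γ₁ γ₂ * σ (γ₁ * γ₂) γ₃ = σ γ₁ (γ₂ * γ₃) * σ γ₂ γ₃)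
    {T : Γ → (lp (fun _ : Γ => ℂ) 2 →L[ℂ] lp (fun _ : Γ => ℂ) 2)}
    (hT : ∀ γ f γ', (T γ f) γ' = f (γ⁻¹ * γ') * (starRingEnd ℂ) (σ γ (γ⁻¹ * γ')))
    (γ : Γ) : R σ hσ_unit γ ∈ Set.centralizer (Set.range T) := by
  rintro m ⟨g, rfl⟩
  refine ContinuousLinearMap.ext fun f => lp.ext (funext fun x => ?_)
  have hL : ((T g * R σ hσ_unit γ) f) x
      = (starRingEnd ℂ) (σ ((g⁻¹ * x) * γ⁻¹) γ) * f ((g⁻¹ * x) * γ⁻¹)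
        * (starRingEnd ℂ) (σ g (g⁻¹ * x)) := by
    rw [ContinuousLinearMap.mul_apply, hT, R_apply]
  have hR : ((R σ hσ_unit γ * T g) f) x
      = (starRingEnd ℂ) (σ (x * γ⁻¹) γ)
        * (f (g⁻¹ * (x * γ⁻¹)) * (starRingEnd ℂ) (σ g (g⁻¹ * (x * γ⁻¹)))) := by
    rw [ContinuousLinearMap.mul_apply, R_apply, hT]
  rw [hL, hR]
  have hgrp : g⁻¹ * (x * γ⁻¹) = (g⁻¹ * x) * γ⁻¹ := by group
  rw [hgrp]
  have key : σ ((g⁻¹ * x) * γ⁻¹) γ * σ g (g⁻¹ * x)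
      = σ (x * γ⁻¹) γ * σ g ((g⁻¹ * x) * γ⁻¹) := by
    have hc := hσ_cocycle g ((g⁻¹ * x) * γ⁻¹) γ
    have h1 : g * (g⁻¹ * x * γ⁻¹) = x * γ⁻¹ := by group
    have h2 : g⁻¹ * x * γ⁻¹ * γ = g⁻¹ * x := by group
    rw [h1, h2] at hc
    linear_combination -hc
  have key' : (starRingEnd ℂ) (σ ((g⁻¹ * x) * γ⁻¹) γ) * (starRingEnd ℂ) (σ g (g⁻¹ * x))
      = (starRingEnd ℂ) (σ (x * γ⁻¹) γ) * (starRingEnd ℂ) (σ g ((g⁻¹ * x) * γ⁻¹)) := by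
    rw [← map_mul, ← map_mul, key]
  linear_combination (f ((g⁻¹ * x) * γ⁻¹)) * key'

end R

end TwistedVNAux

open TwistedVNAux in
/-- Characterization of membership in the twisted group von Neumann algebra
`A^L(Γ,σ̄)` — the bicommutant of the magnetic translations `T^L_γ` on `ℓ²(Γ)` — by the
matrix elements `A_{x,y} = ⟨Aδ_y, δ_x⟩`:
`A ∈ A^L(Γ,σ̄)` iff `A_{xγ,yγ} = conj(σ(x,γ))·σ(y,γ)·A_{x,y}` for all `x, y, γ`. -/
theorem mem_twisted_vN_iff {Γ : Type*} [Group Γ] [DecidableEq Γ]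
    (σ : Γ → Γ → ℂ) (hσ_unit : ∀ a b, ‖σ a b‖ = 1)
    (hσ_one : ∀ γ, σ γ 1 = 1 ∧ σ 1 γ = 1)
    (hσ_cocycle : ∀ γ₁ γ₂ γ₃, σ γ₁ γ₂ * σ (γ₁ * γ₂) γ₃ = σ γ₁ (γ₂ * γ₃) * σ γ₂ γ₃)
    (T : Γ → (lp (fun _ : Γ => ℂ) 2 →L[ℂ] lp (fun _ : Γ => ℂ) 2))
    (hT : ∀ γ f γ', (T γ f) γ' = f (γ⁻¹ * γ') * (starRingEnd ℂ) (σ γ (γ⁻¹ * γ')))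
    (A : lp (fun _ : Γ => ℂ) 2 →L[ℂ] lp (fun _ : Γ => ℂ) 2) :
    A ∈ Set.centralizer (Set.centralizer (Set.range T)) ↔
      ∀ x y γ : Γ, (A (lp.single 2 (y * γ) 1)) (x * γ) =
        (starRingEnd ℂ) (σ x γ) * σ y γ * (A (lp.single 2 y 1)) x := by
  constructor
  · -- forward direction: use the right translations R γ in the commutant
    intro hA x y γ
    rw [Set.mem_centralizer_iff] at hA
    have hR := R_mem_centralizer σ hσ_unit hσ_cocycle hT γ
    have hcomm : R σ hσ_unit γ * A = A * R σ hσ_unit γ := hA (R σ hσ_unit γ) hR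
    have hev : ((R σ hσ_unit γ) (A (lp.single 2 y 1))) (x * γ)
        = (A (R σ hσ_unit γ (lp.single 2 y 1))) (x * γ) := by
      have := congrArg
        (fun O : lp (fun _ : Γ => ℂ) 2 →L[ℂ] lp (fun _ : Γ => ℂ) 2 =>
          (O (lp.single 2 y 1)) (x * γ)) hcomm
      simpa only [ContinuousLinearMap.mul_apply] using this
    rw [TwistedVNAux.R_apply, mul_inv_cancel_right, R_single σ hσ_unit γ y, map_smul,
      lp.coeFn_smul, Pi.smul_apply, smul_eq_mul] at hev
    have e2 : (starRingEnd ℂ) (σ y γ) * σ y γ = 1 := unit_conj_mul (hσ_unit y γ)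
    linear_combination (-(σ y γ)) * hev - ((A (lp.single 2 (y * γ) 1)) (x * γ)) * e2
  · -- backward direction: the summation/reindexing argument
    intro h
    rw [Set.mem_centralizer_iff]
    intro m hm
    -- matrix covariance relation for elements of the commutant
    have hB : ∀ g x y : Γ,
        (m (lp.single 2 (g * y) 1)) x * (starRingEnd ℂ) (σ g y)
          = (starRingEnd ℂ) (σ g (g⁻¹ * x)) * (m (lp.single 2 y 1)) (g⁻¹ * x) := by
      intro g x y
      have hc : T g * m = m * T g := hm (T g) ⟨g, rfl⟩
      have hthis := congrArg
        (fun O : lp (fun _ : Γ => ℂ) 2 →L[ℂ] lp (fun _ : Γ => ℂ) 2 =>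
          (O (lp.single 2 y 1)) x) hc
      simp only [ContinuousLinearMap.mul_apply] at hthis
      rw [hT, T_single σ hT g y, map_smul, lp.coeFn_smul, Pi.smul_apply,
        smul_eq_mul] at hthis
      linear_combination -hthis
    refine clm_ext_singles fun y => lp.ext (funext fun x => ?_)
    simp only [ContinuousLinearMap.mul_apply]
    have hBA := hasSum_matrix m (A (lp.single 2 y 1)) x
    have hAB := hasSum_matrix A (m (lp.single 2 y 1)) x
    let e : Γ ≃ Γ :=
      { toFun := fun z => x * z⁻¹ * y
        invFun := fun w => y * w⁻¹ * x
        left_inv := fun z => by group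
        right_inv := fun w => by group }
    have hBA' := (e.hasSum_iff).2 hBA
    have hterm : ((fun z : Γ => (A (lp.single 2 y 1)) z * (m (lp.single 2 z 1)) x) ∘ e)
        = fun z : Γ => (m (lp.single 2 y 1)) z * (A (lp.single 2 z 1)) x := by
      funext z
      simp only [Function.comp, Equiv.coe_fn_mk, e]
      have hA1 := h (x * z⁻¹) 1 y
      rw [one_mul, (hσ_one y).2, mul_one] at hA1
      have hA2 := h (x * z⁻¹) 1 z
      rw [one_mul, (hσ_one z).2, mul_one, show x * z⁻¹ * z = x by group] at hA2
      have hB1 := hB (x * z⁻¹) x y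
      rw [show (x * z⁻¹)⁻¹ * x = z by group] at hB1
      rw [hA1, hA2]
      linear_combination ((A (lp.single 2 1 1)) (x * z⁻¹)) * hB1
    rw [hterm] at hBA'
    exact hBA'.unique hAB
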